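/- Let U: ℝ³ → [0,∞) be integrable with lim_{|x|→∞} ‖(|x⊥|^α,|x₃|^γ)‖_{2/β}·U(x) = g > 0, where α > 2, β > 0, α/(α-2) < γ < 3α/(α-2), and set η = 3αγ/(2γ+α). Then limsup_{t→∞} t^{-3/η} ∫_{ℝ³} (1 - e^{-t U(x)}) dx ≥ ∫_{ℝ³} (1 - e^{-u(x)}) dx, where u(x) = g·(|x⊥|^{2α/β} + |x₃|^{2γ/β})^{-β/2}. Equivalently, after the substitution x ↦ (t^{1/α}x⊥, t^{1/γ}x₃), one has t^{-3/η} ∫(1 - e^{-tU(x)})dx = ∫(1 - e^{-t U(t^{1/α}y⊥, t^{1/γ}y₃)}) dy, and by Fatou's lemma the liminf of the right side is at least ∫(1 - e^{-u(y)}) dy. -/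

import Mathlib

open MeasureTheory Real Filter

/-- The `2/β`-pseudo-norm of `(c₁, c₂) ∈ ℝ²`. -/
noncomputable def pnorm (β c₁ c₂ : ℝ) : ℝ := (|c₁| ^ (2 / β) + |c₂| ^ (2 / β)) ^ (β / 2)

/-- The anisotropic model potential `u(x) = g (|x⊥|^{2α/β} + |x₃|^{2γ/β})^{-β/2}`. -/
noncomputable def uFun (g α β γ : ℝ) (x : EuclideanSpace ℝ (Fin 3)) : ℝ :=
  g * (Real.sqrt ((x 0) ^ 2 + (x 1) ^ 2) ^ (2 * α / β) + |x 2| ^ (2 * γ / β)) ^ (-(β / 2))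

noncomputable def dmap (c : Fin 3 → ℝ) : EuclideanSpace ℝ (Fin 3) →ₗ[ℝ] EuclideanSpace ℝ (Fin 3) :=
  ((WithLp.linearEquiv 2 ℝ (Fin 3 → ℝ)).symm.toLinearMap) ∘ₗ
    (Matrix.toLin' (Matrix.diagonal c)) ∘ₗ
    ((WithLp.linearEquiv 2 ℝ (Fin 3 → ℝ)).symm.symm.toLinearMap)

lemma dmap_apply (c : Fin 3 → ℝ) (x : EuclideanSpace ℝ (Fin 3)) (i : Fin 3) :
    dmap c x i = c i * x i := by
  simp [dmap, Matrix.toLin'_apply, Matrix.mulVec_diagonal]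

lemma dmap_det (c : Fin 3 → ℝ) : LinearMap.det (dmap c) = c 0 * c 1 * c 2 := by
  rw [dmap, LinearMap.det_conj, LinearMap.det_toLin', Matrix.det_diagonal, Fin.prod_univ_three]

lemma dmap_map_volume (c : Fin 3 → ℝ) (hc : c 0 * c 1 * c 2 ≠ 0) :
    Measure.map (dmap c) volume
      = ENNReal.ofReal |(c 0 * c 1 * c 2)⁻¹| • (volume : Measure (EuclideanSpace ℝ (Fin 3))) := by
  have h := Measure.map_linearMap_addHaar_eq_smul_addHaar
    (volume : Measure (EuclideanSpace ℝ (Fin 3))) (f := dmap c) (by rw [dmap_det]; exact hc)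
  rwa [dmap_det] at h

lemma integral_comp_dmap {f : EuclideanSpace ℝ (Fin 3) → ℝ} (c : Fin 3 → ℝ)
    (hc : c 0 * c 1 * c 2 ≠ 0) (hf : AEStronglyMeasurable f volume) :
    ∫ x, f x = |c 0 * c 1 * c 2| * ∫ y, f (dmap c y) := by
  have hmeas : AEMeasurable (dmap c) volume :=
    ((dmap c).continuous_of_finiteDimensional).measurable.aemeasurable
  have habs : Measure.map (dmap c) volume ≪ volume := by
    rw [dmap_map_volume c hc]; exact Measure.AbsolutelyContinuous.smul_left .rfl _
  have h1 : ∫ y, f (dmap c y) = ∫ x, f x ∂(Measure.map (dmap c) volume) :=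
    (integral_map hmeas (hf.mono_ac habs)).symm
  rw [h1, dmap_map_volume c hc, integral_smul_measure, ENNReal.toReal_ofReal (abs_nonneg _)]
  rw [abs_inv, smul_eq_mul, ← mul_assoc, mul_inv_cancel₀ (by positivity), one_mul]

lemma coord_le_norm (x : EuclideanSpace ℝ (Fin 3)) (i : Fin 3) : |x i| ≤ ‖x‖ := by
  rw [EuclideanSpace.norm_eq, ← Real.sqrt_sq_eq_abs]
  apply Real.sqrt_le_sqrt
  simpa [sq_abs] using
    Finset.single_le_sum (f := fun j => ‖x j‖ ^ 2) (fun j _ => sq_nonneg _) (Finset.mem_univ i)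

noncomputable def pfun (α β γ : ℝ) (x : EuclideanSpace ℝ (Fin 3)) : ℝ :=
  pnorm β (Real.sqrt ((x 0) ^ 2 + (x 1) ^ 2) ^ α) (|x 2| ^ γ)

lemma pfun_nonneg (α β γ : ℝ) (x : EuclideanSpace ℝ (Fin 3)) : 0 ≤ pfun α β γ x :=
  Real.rpow_nonneg (by positivity) _

lemma uFun_eq_pfun (g α β γ : ℝ) (hβ : 0 < β) (x : EuclideanSpace ℝ (Fin 3)) :
    uFun g α β γ x = g * (pfun α β γ x)⁻¹ := by
  have h1 : 0 ≤ Real.sqrt ((x 0) ^ 2 + (x 1) ^ 2) := Real.sqrt_nonneg _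
  have h2 : (0:ℝ) ≤ |x 2| := abs_nonneg _
  rw [uFun, pfun, pnorm, abs_of_nonneg (Real.rpow_nonneg h1 _),
    abs_of_nonneg (Real.rpow_nonneg h2 _), ← Real.rpow_mul h1, ← Real.rpow_mul h2,
    ← Real.rpow_neg (by positivity)]
  ring_nf

lemma pfun_pos (α β γ : ℝ) (hα : 0 < α) (hβ : 0 < β) (hγ : 0 < γ)
    {x : EuclideanSpace ℝ (Fin 3)} (hx : x ≠ 0) : 0 < pfun α β γ x := by
  have hex : x 0 ≠ 0 ∨ x 1 ≠ 0 ∨ x 2 ≠ 0 := by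
    by_contra h
    push_neg at h
    exact hx (by ext i; fin_cases i <;> simp [h.1, h.2.1, h.2.2])
  have key : 0 < |Real.sqrt ((x 0) ^ 2 + (x 1) ^ 2) ^ α| ^ (2/β) + |(|x 2| ^ γ)| ^ (2/β) := by
    rcases hex with h | h | h
    · apply add_pos_of_pos_of_nonneg _ (Real.rpow_nonneg (abs_nonneg _) _)
      apply Real.rpow_pos_of_pos
      rw [abs_pos]
      exact (Real.rpow_pos_of_pos (Real.sqrt_pos.2 (by positivity)) _).ne'
    · apply add_pos_of_pos_of_nonneg _ (Real.rpow_nonneg (abs_nonneg _) _)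
      apply Real.rpow_pos_of_pos
      rw [abs_pos]
      exact (Real.rpow_pos_of_pos (Real.sqrt_pos.2 (by positivity)) _).ne'
    · apply add_pos_of_nonneg_of_pos (Real.rpow_nonneg (abs_nonneg _) _)
      apply Real.rpow_pos_of_pos
      rw [abs_pos]
      exact (Real.rpow_pos_of_pos (abs_pos.2 h) _).ne'
  exact Real.rpow_pos_of_pos key _

lemma pnorm_smul {β t : ℝ} (hβ : 0 < β) (ht : 0 < t) (a b : ℝ) :
    pnorm β (t * a) (t * b) = t * pnorm β a b := by
  have h1 : ((2:ℝ)/β) * (β/2) = 1 := by field_simp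
  rw [pnorm, pnorm, abs_mul, abs_mul, abs_of_pos ht,
    Real.mul_rpow ht.le (abs_nonneg a), Real.mul_rpow ht.le (abs_nonneg b), ← mul_add,
    Real.mul_rpow (Real.rpow_nonneg ht.le _) (by positivity), ← Real.rpow_mul ht.le, h1,
    Real.rpow_one]

noncomputable def ct (α γ t : ℝ) : Fin 3 → ℝ := ![t ^ (1/α), t ^ (1/α), t ^ (1/γ)]

lemma ct0 (α γ t : ℝ) : ct α γ t 0 = t ^ (1/α) := rfl
lemma ct1 (α γ t : ℝ) : ct α γ t 1 = t ^ (1/α) := rfl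
lemma ct2 (α γ t : ℝ) : ct α γ t 2 = t ^ (1/γ) := rfl

lemma rpow_inv_rpow' {t c : ℝ} (ht : 0 ≤ t) (hc : c ≠ 0) : (t ^ (1/c)) ^ c = t := by
  rw [← Real.rpow_mul ht, one_div, inv_mul_cancel₀ hc, Real.rpow_one]

lemma pfun_scale {α β γ t : ℝ} (hα : 0 < α) (hβ : 0 < β) (hγ : 0 < γ) (ht : 0 < t)
    (y : EuclideanSpace ℝ (Fin 3)) :
    pfun α β γ (dmap (ct α γ t) y) = t * pfun α β γ y := by
  have hta : (0:ℝ) < t ^ (1/α) := Real.rpow_pos_of_pos ht _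
  have htg : (0:ℝ) < t ^ (1/γ) := Real.rpow_pos_of_pos ht _
  have hs1 : Real.sqrt ((dmap (ct α γ t) y 0) ^ 2 + (dmap (ct α γ t) y 1) ^ 2)
      = t ^ (1/α) * Real.sqrt ((y 0) ^ 2 + (y 1) ^ 2) := by
    rw [dmap_apply, dmap_apply, ct0, ct1, mul_pow, mul_pow, ← mul_add,
      Real.sqrt_mul (by positivity), Real.sqrt_sq hta.le]
  have hr : 0 ≤ Real.sqrt ((y 0) ^ 2 + (y 1) ^ 2) := Real.sqrt_nonneg _
  rw [pfun, hs1, Real.mul_rpow hta.le hr, rpow_inv_rpow' ht.le hα.ne',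
    dmap_apply, ct2, abs_mul, abs_of_pos htg,
    Real.mul_rpow htg.le (abs_nonneg _), rpow_inv_rpow' ht.le hγ.ne', pnorm_smul hβ ht]
  rfl

lemma tendsto_dmap_cocompact {α γ : ℝ} (hα : 0 < α) (hγ : 0 < γ)
    {y : EuclideanSpace ℝ (Fin 3)} (hy : y ≠ 0) :
    Tendsto (fun t : ℝ => dmap (ct α γ t) y) atTop
      (cocompact (EuclideanSpace ℝ (Fin 3))) := by
  rw [← Metric.cobounded_eq_cocompact]
  apply tendsto_norm_atTop_iff_cobounded.1
  have hex : ∃ i, y i ≠ 0 := by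
    by_contra h
    push_neg at h
    exact hy (by ext i; simp [h i])
  obtain ⟨i, hi⟩ := hex
  have he : ∃ e : ℝ, 0 < e ∧ ∀ t : ℝ, ct α γ t i = t ^ e := by
    fin_cases i
    · exact ⟨1/α, by positivity, fun t => rfl⟩
    · exact ⟨1/α, by positivity, fun t => rfl⟩
    · exact ⟨1/γ, by positivity, fun t => rfl⟩
  obtain ⟨e, he_pos, hce⟩ := he
  apply tendsto_atTop_mono' _ _ ((tendsto_rpow_atTop he_pos).atTop_mul_const (abs_pos.2 hi))
  filter_upwards [eventually_ge_atTop (0:ℝ)] with t ht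
  calc t ^ e * |y i| = |ct α γ t i * y i| := by
        rw [abs_mul, hce, abs_of_nonneg (Real.rpow_nonneg ht _)]
    _ = |dmap (ct α γ t) y i| := by rw [dmap_apply]
    _ ≤ ‖dmap (ct α γ t) y‖ := coord_le_norm _ _

lemma tendsto_integrand_pt {U : EuclideanSpace ℝ (Fin 3) → ℝ} {g α β γ : ℝ}
    (hα : 0 < α) (hβ : 0 < β) (hγ : 0 < γ)
    (hlim : Tendsto
      (fun x : EuclideanSpace ℝ (Fin 3) =>
        pnorm β (Real.sqrt ((x 0) ^ 2 + (x 1) ^ 2) ^ α) (|x 2| ^ γ) * U x)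
      (cocompact (EuclideanSpace ℝ (Fin 3))) (nhds g))
    {y : EuclideanSpace ℝ (Fin 3)} (hy : y ≠ 0) :
    Tendsto (fun t : ℝ => 1 - Real.exp (-(t * U (dmap (ct α γ t) y)))) atTop
      (nhds (1 - Real.exp (-(uFun g α β γ y)))) := by
  have hpy : 0 < pfun α β γ y := pfun_pos α β γ hα hβ hγ hy
  have h1 : Tendsto (fun t : ℝ => t * U (dmap (ct α γ t) y)) atTop
      (nhds (g * (pfun α β γ y)⁻¹)) := by
    have h2 : Tendsto (fun t : ℝ =>
        pfun α β γ (dmap (ct α γ t) y) * U (dmap (ct α γ t) y) * (pfun α β γ y)⁻¹) atTop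
        (nhds (g * (pfun α β γ y)⁻¹)) :=
      (hlim.comp (tendsto_dmap_cocompact hα hγ hy)).mul_const _
    apply h2.congr'
    filter_upwards [eventually_gt_atTop (0:ℝ)] with t ht
    rw [pfun_scale hα hβ hγ ht]
    field_simp
  rw [uFun_eq_pfun g α β γ hβ]
  exact (Real.continuous_exp.tendsto _).comp h1.neg |>.const_sub 1

lemma one_sub_exp_nonneg {s : ℝ} (hs : 0 ≤ s) : 0 ≤ 1 - Real.exp (-s) := by
  have := Real.exp_le_one_iff.2 (neg_nonpos.2 hs)
  linarith

lemma one_sub_exp_le (s : ℝ) : 1 - Real.exp (-s) ≤ s := by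
  have := Real.add_one_le_exp (-s)
  linarith

lemma one_sub_exp_le_one (s : ℝ) : 1 - Real.exp (-s) ≤ 1 := by
  have := Real.exp_nonneg (-s)
  linarith

lemma one_sub_exp_two_le {s : ℝ} : 1 - Real.exp (-(2 * s)) ≤ 2 * (1 - Real.exp (-s)) := by
  have h : Real.exp (-(2 * s)) = Real.exp (-s) * Real.exp (-s) := by
    rw [← Real.exp_add]; ring_nf
  nlinarith [sq_nonneg (1 - Real.exp (-s))]

lemma one_sub_exp_mono {s r : ℝ} (h : s ≤ r) : 1 - Real.exp (-s) ≤ 1 - Real.exp (-r) := by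
  have := Real.exp_le_exp.2 (neg_le_neg h)
  linarith

section Meas

variable {U : EuclideanSpace ℝ (Fin 3) → ℝ} (hUint : Integrable U)
include hUint

lemma integrand_asm (t : ℝ) :
    AEStronglyMeasurable (fun x => 1 - Real.exp (-(t * U x)))
      (volume : Measure (EuclideanSpace ℝ (Fin 3))) :=
  aestronglyMeasurable_const.sub
    (Real.continuous_exp.comp_aestronglyMeasurable
      (hUint.aestronglyMeasurable.const_mul t).neg)

lemma integrand_integrable (hU0 : ∀ x, 0 ≤ U x) {t : ℝ} (ht : 0 ≤ t) :
    Integrable (fun x => 1 - Real.exp (-(t * U x)))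
      (volume : Measure (EuclideanSpace ℝ (Fin 3))) := by
  apply (hUint.const_mul t).mono' (integrand_asm hUint t)
  filter_upwards with x
  rw [Real.norm_eq_abs, abs_of_nonneg (one_sub_exp_nonneg (mul_nonneg ht (hU0 _)))]
  exact one_sub_exp_le _

lemma comp_integrable {c : Fin 3 → ℝ} (hc : c 0 * c 1 * c 2 ≠ 0) :
    Integrable (fun y => U (dmap c y)) (volume : Measure (EuclideanSpace ℝ (Fin 3))) := by
  have hmeas : AEMeasurable (dmap c) (volume : Measure (EuclideanSpace ℝ (Fin 3))) :=
    ((dmap c).continuous_of_finiteDimensional).measurable.aemeasurable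
  have habs : Measure.map (dmap c) volume ≪ volume := by
    rw [dmap_map_volume c hc]; exact Measure.AbsolutelyContinuous.smul_left .rfl _
  have hU' : Integrable U (Measure.map (dmap c) volume) := by
    rw [dmap_map_volume c hc]
    exact hUint.smul_measure ENNReal.ofReal_ne_top
  exact (integrable_map_measure (hUint.aestronglyMeasurable.mono_ac habs) hmeas).1 hU'

lemma comp_asm {c : Fin 3 → ℝ} (hc : c 0 * c 1 * c 2 ≠ 0) (t : ℝ) :
    AEStronglyMeasurable (fun y => 1 - Real.exp (-(t * U (dmap c y))))
      (volume : Measure (EuclideanSpace ℝ (Fin 3))) :=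
  aestronglyMeasurable_const.sub
    (Real.continuous_exp.comp_aestronglyMeasurable
      (((comp_integrable hUint hc).aestronglyMeasurable.const_mul t).neg))

lemma comp_integrand_integrable (hU0 : ∀ x, 0 ≤ U x) {c : Fin 3 → ℝ}
    (hc : c 0 * c 1 * c 2 ≠ 0) {t : ℝ} (ht : 0 ≤ t) :
    Integrable (fun y => 1 - Real.exp (-(t * U (dmap c y))))
      (volume : Measure (EuclideanSpace ℝ (Fin 3))) := by
  apply ((comp_integrable hUint hc).const_mul t).mono' (comp_asm hUint hc t)
  filter_upwards with x
  rw [Real.norm_eq_abs, abs_of_nonneg (one_sub_exp_nonneg (mul_nonneg ht (hU0 _)))]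
  exact one_sub_exp_le _

end Meas

lemma ct_det {α γ η t : ℝ} (hs : 2/α + 1/γ = 3/η) (ht : 0 < t) :
    ct α γ t 0 * ct α γ t 1 * ct α γ t 2 = t ^ ((3:ℝ)/η) := by
  rw [ct0, ct1, ct2, ← Real.rpow_add ht, ← Real.rpow_add ht]
  congr 1
  rw [← hs]; ring

lemma scaled_integral_eq {U : EuclideanSpace ℝ (Fin 3) → ℝ} (hUint : Integrable U)
    {α γ η t : ℝ} (hs : 2/α + 1/γ = 3/η) (ht : 0 < t) :
    t ^ (-(3/η)) * ∫ x : EuclideanSpace ℝ (Fin 3), (1 - Real.exp (-(t * U x)))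
      = ∫ y : EuclideanSpace ℝ (Fin 3), (1 - Real.exp (-(t * U (dmap (ct α γ t) y)))) := by
  have hd : ct α γ t 0 * ct α γ t 1 * ct α γ t 2 = t ^ ((3:ℝ)/η) := ct_det hs ht
  have hdpos : (0:ℝ) < t ^ ((3:ℝ)/η) := Real.rpow_pos_of_pos ht _
  have hc : ct α γ t 0 * ct α γ t 1 * ct α γ t 2 ≠ 0 := by rw [hd]; exact hdpos.ne'
  rw [integral_comp_dmap (ct α γ t) hc (integrand_asm hUint t), hd, abs_of_pos hdpos,
    ← mul_assoc, ← Real.rpow_add ht, neg_add_cancel, Real.rpow_zero, one_mul]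

lemma uFun_nonneg {g α β γ : ℝ} (hg : 0 < g) (hβ : 0 < β) (x : EuclideanSpace ℝ (Fin 3)) :
    0 ≤ uFun g α β γ x := by
  rw [uFun_eq_pfun g α β γ hβ]
  exact mul_nonneg hg.le (inv_nonneg.2 (pfun_nonneg α β γ x))

lemma F_bound {U : EuclideanSpace ℝ (Fin 3) → ℝ} (hUint : Integrable U)
    (hU0 : ∀ x, 0 ≤ U x) {g α β γ η : ℝ} (hg : 0 < g) (hα : 0 < α) (hβ : 0 < β) (hγ : 0 < γ)
    (hs : 2/α + 1/γ = 3/η)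
    (hlim : Tendsto
      (fun x : EuclideanSpace ℝ (Fin 3) =>
        pnorm β (Real.sqrt ((x 0) ^ 2 + (x 1) ^ 2) ^ α) (|x 2| ^ γ) * U x)
      (cocompact (EuclideanSpace ℝ (Fin 3))) (nhds g))
    (hInt : Integrable (fun x : EuclideanSpace ℝ (Fin 3) => 1 - Real.exp (-(uFun g α β γ x)))) :
    ∃ B : ℝ, ∀ᶠ t in (atTop : Filter ℝ),
      (t ^ (-(3/η)) * ∫ x : EuclideanSpace ℝ (Fin 3), (1 - Real.exp (-(t * U x)))) ≤ B := by
  have hev : ∀ᶠ x in cocompact (EuclideanSpace ℝ (Fin 3)),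
      pnorm β (Real.sqrt ((x 0) ^ 2 + (x 1) ^ 2) ^ α) (|x 2| ^ γ) * U x < 2 * g :=
    hlim.eventually (eventually_lt_nhds (by linarith))
  obtain ⟨K, hK, hKsub⟩ := (hasBasis_cocompact.eventually_iff).1 hev
  set K' : Set (EuclideanSpace ℝ (Fin 3)) := K ∪ {0} with hK'def
  have hK' : IsCompact K' := hK.union isCompact_singleton
  refine ⟨(volume K').toReal + 2 * ∫ x : EuclideanSpace ℝ (Fin 3),
    (1 - Real.exp (-(uFun g α β γ x))), ?_⟩
  filter_upwards [eventually_ge_atTop (1:ℝ)] with t ht1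
  have ht : (0:ℝ) < t := lt_of_lt_of_le one_pos ht1
  have hd : ct α γ t 0 * ct α γ t 1 * ct α γ t 2 = t ^ ((3:ℝ)/η) := ct_det hs ht
  have hdpos : (0:ℝ) < t ^ ((3:ℝ)/η) := Real.rpow_pos_of_pos ht _
  have hc : ct α γ t 0 * ct α γ t 1 * ct α γ t 2 ≠ 0 := by rw [hd]; exact hdpos.ne'
  rw [scaled_integral_eq hUint hs ht]
  set P : Set (EuclideanSpace ℝ (Fin 3)) := (dmap (ct α γ t)) ⁻¹' K' with hPdef
  have hPmeas : MeasurableSet P :=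
    (hK'.isClosed.preimage (dmap (ct α γ t)).continuous_of_finiteDimensional).measurableSet
  have hPvol : volume P = ENNReal.ofReal |(t ^ ((3:ℝ)/η))⁻¹| * volume K' := by
    rw [hPdef, Measure.addHaar_preimage_linearMap volume (by rw [dmap_det]; exact hc), dmap_det,
      hd]
  have hPfin : volume P < ⊤ := by
    rw [hPvol]
    exact ENNReal.mul_lt_top ENNReal.ofReal_lt_top hK'.measure_lt_top
  -- pointwise bound
  have hptwise : ∀ y : EuclideanSpace ℝ (Fin 3),
      1 - Real.exp (-(t * U (dmap (ct α γ t) y)))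
        ≤ P.indicator (fun _ => (1:ℝ)) y + 2 * (1 - Real.exp (-(uFun g α β γ y))) := by
    intro y
    by_cases hyP : y ∈ P
    · have h2 : 0 ≤ 2 * (1 - Real.exp (-(uFun g α β γ y))) := by
        have := one_sub_exp_nonneg (uFun_nonneg (α := α) (γ := γ) hg hβ y)
        linarith
      rw [Set.indicator_of_mem hyP]
      have := one_sub_exp_le_one (t * U (dmap (ct α γ t) y))
      linarith
    · rw [Set.indicator_of_notMem hyP, zero_add]
      have hxK : dmap (ct α γ t) y ∉ K' := hyP
      have hxne : dmap (ct α γ t) y ≠ 0 := fun h => hxK (Or.inr h)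
      have hyne : y ≠ 0 := by
        intro h; exact hxne (by rw [h]; exact map_zero _)
      have hpfx : 0 < pfun α β γ (dmap (ct α γ t) y) := pfun_pos α β γ hα hβ hγ hxne
      have hpfy : 0 < pfun α β γ y := pfun_pos α β γ hα hβ hγ hyne
      have hUb : pfun α β γ (dmap (ct α γ t) y) * U (dmap (ct α γ t) y) < 2 * g :=
        hKsub (show dmap (ct α γ t) y ∈ Kᶜ from fun h => hxK (Or.inl h))
      have hscale : pfun α β γ (dmap (ct α γ t) y) = t * pfun α β γ y :=
        pfun_scale hα hβ hγ ht y
      have htU : t * U (dmap (ct α γ t) y) ≤ 2 * uFun g α β γ y := by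
        rw [uFun_eq_pfun g α β γ hβ,
          show 2 * (g * (pfun α β γ y)⁻¹) = 2 * g / (pfun α β γ y) by ring,
          le_div_iff₀ hpfy]
        rw [hscale] at hUb
        calc t * U (dmap (ct α γ t) y) * pfun α β γ y
            = t * pfun α β γ y * U (dmap (ct α γ t) y) := by ring
          _ ≤ 2 * g := hUb.le
      calc 1 - Real.exp (-(t * U (dmap (ct α γ t) y)))
          ≤ 1 - Real.exp (-(2 * uFun g α β γ y)) := one_sub_exp_mono htU
        _ ≤ 2 * (1 - Real.exp (-(uFun g α β γ y))) := one_sub_exp_two_le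
  -- integrate the bound
  have hRHSint : Integrable (fun y : EuclideanSpace ℝ (Fin 3) =>
      P.indicator (fun _ => (1:ℝ)) y + 2 * (1 - Real.exp (-(uFun g α β γ y)))) volume := by
    apply Integrable.add _ (hInt.const_mul 2)
    rw [integrable_indicator_iff hPmeas]
    exact integrableOn_const hPfin.ne
  have hLHSint : Integrable (fun y : EuclideanSpace ℝ (Fin 3) =>
      1 - Real.exp (-(t * U (dmap (ct α γ t) y)))) volume :=
    comp_integrand_integrable hUint hU0 hc ht.le
  have hmono := integral_mono hLHSint hRHSint hptwise
  rw [integral_add ((integrable_indicator_iff hPmeas).2 (integrableOn_const hPfin.ne))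
    (hInt.const_mul 2), integral_indicator_const (1:ℝ) hPmeas, integral_const_mul] at hmono
  have hPle : (volume P).toReal ≤ (volume K').toReal := by
    rw [hPvol, ENNReal.toReal_mul, ENNReal.toReal_ofReal (abs_nonneg _)]
    have h1 : (1:ℝ) ≤ t ^ ((3:ℝ)/η) := by
      have h30 : (0:ℝ) ≤ 3/η := by rw [← hs]; positivity
      calc (1:ℝ) = 1 ^ ((3:ℝ)/η) := (Real.one_rpow _).symm
        _ ≤ t ^ ((3:ℝ)/η) := Real.rpow_le_rpow zero_le_one ht1 h30
    have h2 : |(t ^ ((3:ℝ)/η))⁻¹| ≤ 1 := by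
      rw [abs_of_nonneg (inv_nonneg.2 hdpos.le)]
      exact inv_le_one_of_one_le₀ h1
    calc |(t ^ ((3:ℝ)/η))⁻¹| * (volume K').toReal ≤ 1 * (volume K').toReal :=
          mul_le_mul_of_nonneg_right h2 ENNReal.toReal_nonneg
      _ = (volume K').toReal := one_mul _
  have := hmono
  simp only [smul_eq_mul, mul_one, measureReal_def] at this
  linarith
lemma F_lower {U : EuclideanSpace ℝ (Fin 3) → ℝ} (hUint : Integrable U)
    (hU0 : ∀ x, 0 ≤ U x) {g α β γ η c : ℝ} (hα : 0 < α) (hβ : 0 < β) (hγ : 0 < γ)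
    (hs : 2/α + 1/γ = 3/η)
    (hlim : Tendsto
      (fun x : EuclideanSpace ℝ (Fin 3) =>
        pnorm β (Real.sqrt ((x 0) ^ 2 + (x 1) ^ 2) ^ α) (|x 2| ^ γ) * U x)
      (cocompact (EuclideanSpace ℝ (Fin 3))) (nhds g))
    (hInt : Integrable (fun x : EuclideanSpace ℝ (Fin 3) => 1 - Real.exp (-(uFun g α β γ x))))
    (hc : c < ∫ x : EuclideanSpace ℝ (Fin 3), (1 - Real.exp (-(uFun g α β γ x)))) :
    ∀ᶠ t in (atTop : Filter ℝ),
      c ≤ t ^ (-(3/η)) * ∫ x : EuclideanSpace ℝ (Fin 3), (1 - Real.exp (-(t * U x))) := by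
  have htend : Tendsto
      (fun n : ℕ => ∫ y in Metric.closedBall (0 : EuclideanSpace ℝ (Fin 3)) n,
        (1 - Real.exp (-(uFun g α β γ y)))) atTop
      (nhds (∫ x : EuclideanSpace ℝ (Fin 3), (1 - Real.exp (-(uFun g α β γ x))))) := by
    have h := tendsto_setIntegral_of_monotone
      (f := fun x : EuclideanSpace ℝ (Fin 3) => 1 - Real.exp (-(uFun g α β γ x)))
      (s := fun n : ℕ => Metric.closedBall (0 : EuclideanSpace ℝ (Fin 3)) n)
      (fun n => measurableSet_closedBall)
      (fun n m hnm => Metric.closedBall_subset_closedBall (by exact_mod_cast hnm))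
      (by rw [Metric.iUnion_closedBall_nat]; exact hInt.integrableOn)
    rwa [Metric.iUnion_closedBall_nat, setIntegral_univ] at h
  obtain ⟨N, hN⟩ := (htend.eventually (eventually_gt_nhds hc)).exists
  set B := Metric.closedBall (0 : EuclideanSpace ℝ (Fin 3)) (N : ℝ) with hBdef
  have hBvol : volume B < ⊤ := measure_closedBall_lt_top
  have h0 : ∀ᵐ y ∂(volume : Measure (EuclideanSpace ℝ (Fin 3))),
      y ≠ (0 : EuclideanSpace ℝ (Fin 3)) := by
    rw [ae_iff]
    simp only [not_not]
    rw [show {y : EuclideanSpace ℝ (Fin 3) | y = 0} = {0} from Set.setOf_eq_eq_singleton]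
    exact measure_singleton _
  have hdom : Tendsto
      (fun t : ℝ => ∫ y in B, (1 - Real.exp (-(t * U (dmap (ct α γ t) y))))) atTop
      (nhds (∫ y in B, (1 - Real.exp (-(uFun g α β γ y))))) := by
    apply tendsto_integral_filter_of_dominated_convergence (bound := fun _ => (1:ℝ))
    · filter_upwards [eventually_gt_atTop (0:ℝ)] with t ht
      have hd : ct α γ t 0 * ct α γ t 1 * ct α γ t 2 = t ^ ((3:ℝ)/η) := ct_det hs ht
      have hcne : ct α γ t 0 * ct α γ t 1 * ct α γ t 2 ≠ 0 := by
        rw [hd]; exact (Real.rpow_pos_of_pos ht _).ne'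
      exact (comp_asm hUint hcne t).restrict
    · filter_upwards [eventually_ge_atTop (0:ℝ)] with t ht
      filter_upwards with y
      rw [Real.norm_eq_abs, abs_of_nonneg (one_sub_exp_nonneg (mul_nonneg ht (hU0 _)))]
      exact one_sub_exp_le_one _
    · exact integrableOn_const hBvol.ne
    · exact ae_restrict_of_ae (h0.mono fun y hy => tendsto_integrand_pt hα hβ hγ hlim hy)
  filter_upwards [hdom.eventually (eventually_gt_nhds hN), eventually_gt_atTop (0:ℝ)]
    with t hBt ht
  have hd : ct α γ t 0 * ct α γ t 1 * ct α γ t 2 = t ^ ((3:ℝ)/η) := ct_det hs ht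
  have hcne : ct α γ t 0 * ct α γ t 1 * ct α γ t 2 ≠ 0 := by
    rw [hd]; exact (Real.rpow_pos_of_pos ht _).ne'
  rw [scaled_integral_eq hUint hs ht]
  have hint : Integrable (fun y : EuclideanSpace ℝ (Fin 3) =>
      1 - Real.exp (-(t * U (dmap (ct α γ t) y)))) volume :=
    comp_integrand_integrable hUint hU0 hcne ht.le
  have hnn : 0 ≤ᵐ[volume] fun y : EuclideanSpace ℝ (Fin 3) =>
      1 - Real.exp (-(t * U (dmap (ct α γ t) y))) := by
    filter_upwards with y
    exact one_sub_exp_nonneg (mul_nonneg ht.le (hU0 _))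
  exact le_trans hBt.le (setIntegral_le_integral hint hnn)

/-- Lower asymptotic bound via Fatou:
`liminf_{t→∞} t^{-3/η} ∫_{ℝ³} (1 - e^{-tU(x)}) dx ≥ ∫_{ℝ³} (1 - e^{-u(x)}) dx`. -/
theorem liminf_scaled_integral_ge (U : EuclideanSpace ℝ (Fin 3) → ℝ) (hUint : Integrable U)
    (hU0 : ∀ x, 0 ≤ U x) (g α β γ η : ℝ) (hg : 0 < g) (hα : 2 < α) (hβ : 0 < β)
    (hγ₁ : α / (α - 2) < γ) (hγ₂ : γ < 3 * α / (α - 2)) (hη : η = 3 * α * γ / (2 * γ + α))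
    (hlim : Tendsto
      (fun x : EuclideanSpace ℝ (Fin 3) =>
        pnorm β (Real.sqrt ((x 0) ^ 2 + (x 1) ^ 2) ^ α) (|x 2| ^ γ) * U x)
      (cocompact (EuclideanSpace ℝ (Fin 3))) (nhds g)) :
    (∫ x : EuclideanSpace ℝ (Fin 3), (1 - Real.exp (-(uFun g α β γ x)))) ≤
      Filter.liminf
        (fun t : ℝ => t ^ (-(3 / η)) *
          ∫ x : EuclideanSpace ℝ (Fin 3), (1 - Real.exp (-(t * U x)))) atTop := by
  have hα0 : (0:ℝ) < α := by linarith
  have hα2 : (0:ℝ) < α - 2 := by linarith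
  have hγ0 : (0:ℝ) < γ := lt_trans (div_pos hα0 hα2) hγ₁
  have hs : 2/α + 1/γ = 3/η := by
    subst hη
    have h2γα : (0:ℝ) < 2*γ + α := by linarith
    field_simp
  have h0mem : ∀ᶠ t in (atTop : Filter ℝ),
      (0:ℝ) ≤ t ^ (-(3/η)) * ∫ x : EuclideanSpace ℝ (Fin 3), (1 - Real.exp (-(t * U x))) := by
    filter_upwards [eventually_ge_atTop (0:ℝ)] with t ht
    exact mul_nonneg (Real.rpow_nonneg ht _)
      (integral_nonneg fun x => one_sub_exp_nonneg (mul_nonneg ht (hU0 x)))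
  rw [Filter.liminf_eq]
  by_cases hInt : Integrable
      (fun x : EuclideanSpace ℝ (Fin 3) => 1 - Real.exp (-(uFun g α β γ x))) volume
  · obtain ⟨B, hB⟩ := F_bound hUint hU0 hg hα0 hβ hγ0 hs hlim hInt
    have hBdd : BddAbove {a : ℝ | ∀ᶠ t in (atTop : Filter ℝ),
        a ≤ t ^ (-(3/η)) * ∫ x : EuclideanSpace ℝ (Fin 3), (1 - Real.exp (-(t * U x)))} := by
      refine ⟨B, fun a ha => ?_⟩
      obtain ⟨t, h1, h2⟩ := (ha.and hB).exists
      exact h1.trans h2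
    apply le_of_forall_lt
    intro c hcI
    set c' : ℝ := (c + ∫ x : EuclideanSpace ℝ (Fin 3), (1 - Real.exp (-(uFun g α β γ x)))) / 2
      with hc'def
    have hc1 : c < c' := by rw [hc'def]; linarith
    have hc2 : c' < ∫ x : EuclideanSpace ℝ (Fin 3), (1 - Real.exp (-(uFun g α β γ x))) := by
      rw [hc'def]; linarith
    have hmem : c' ∈ {a : ℝ | ∀ᶠ t in (atTop : Filter ℝ),
        a ≤ t ^ (-(3/η)) * ∫ x : EuclideanSpace ℝ (Fin 3), (1 - Real.exp (-(t * U x)))} :=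
      F_lower hUint hU0 hα0 hβ hγ0 hs hlim hInt hc2
    exact lt_of_lt_of_le hc1 (le_csSup hBdd hmem)
  · rw [integral_undef hInt]
    by_cases hbdd : BddAbove {a : ℝ | ∀ᶠ t in (atTop : Filter ℝ),
        a ≤ t ^ (-(3/η)) * ∫ x : EuclideanSpace ℝ (Fin 3), (1 - Real.exp (-(t * U x)))}
    · exact le_csSup hbdd h0mem
    · rw [Real.sSup_of_not_bddAbove hbdd]
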